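/- arXiv:0911.4977 — 3 statements merged into one kernel-verified Lean document; each statement's English description precedes it below -/
import Mathlib

section
/- Let μ be a complex regular Borel measure on ℝ with Fourier transform μ̂(r) = ∫ e^{-irx} dμ(x). Let (Iₙ) be a sequence of intervals Iₙ = [aₙ, bₙ] with lengths lₙ = bₙ - aₙ → ∞. Then for every x₀ ∈ ℝ, μ({x₀}) = lim_{n→∞} (1/lₙ) ∫_{Iₙ} e^{i r x₀} μ̂(r) dr. -/
open MeasureTheory Filter Complex

/-- A complex regular Borel measure on ℝ is represented as a density `f`
(integrable) with respect to a finite regular positive measure `ν`.  Its Fourier–Stieltjes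
transform is `μ̂(r) = ∫ e^{-irx} f(x) dν(x)`.  If `Iₙ = [aₙ, bₙ]` with lengths
`lₙ = bₙ - aₙ → ∞`, then for every `x₀ ∈ ℝ`,
`μ({x₀}) = lim_n (1/lₙ) ∫_{Iₙ} e^{i r x₀} μ̂(r) dr`. -/
theorem stmt0 (ν : Measure ℝ) [IsFiniteMeasure ν] [ν.Regular] (f : ℝ → ℂ)
    (hf : Integrable f ν) (a b : ℕ → ℝ) (hab : ∀ n, a n ≤ b n)
    (hl : Tendsto (fun n => b n - a n) atTop atTop) (x₀ : ℝ) :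
    Tendsto (fun n => (1 / ((b n - a n : ℝ) : ℂ)) *
        ∫ r in a n..b n, Complex.exp (Complex.I * r * x₀) *
          ∫ x, Complex.exp (-(Complex.I * r * x)) * f x ∂ν)
      atTop (nhds (∫ x in ({x₀} : Set ℝ), f x ∂ν)) := by
  set g : ℕ → ℝ → ℂ := fun n x =>
    (1 / ((b n - a n : ℝ) : ℂ)) * ∫ r in a n..b n, Complex.exp (Complex.I * r * (x₀ - x))
    with hgdef
  have key : ∀ n, (1 / ((b n - a n : ℝ) : ℂ)) *
      ∫ r in a n..b n, Complex.exp (Complex.I * r * x₀) *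
        ∫ x, Complex.exp (-(Complex.I * r * x)) * f x ∂ν
      = ∫ x, g n x * f x ∂ν := by
    intro n
    have inner : ∀ r : ℝ, Complex.exp (Complex.I * r * x₀) *
        ∫ x, Complex.exp (-(Complex.I * r * x)) * f x ∂ν
        = ∫ x, Complex.exp (Complex.I * r * (x₀ - x)) * f x ∂ν := by
      intro r
      rw [← integral_const_mul]
      refine integral_congr_ae (Eventually.of_forall fun x => ?_)
      show Complex.exp (Complex.I * r * x₀) * (Complex.exp (-(Complex.I * r * x)) * f x)
        = Complex.exp (Complex.I * r * (x₀ - x)) * f x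
      rw [← mul_assoc, ← Complex.exp_add]
      congr 2
      push_cast
      ring
    have hint : Integrable (Function.uncurry fun (r x : ℝ) =>
        Complex.exp (Complex.I * r * (x₀ - x)) * f x)
        ((volume.restrict (Set.Ioc (a n) (b n))).prod ν) := by
      have hc : Continuous fun p : ℝ × ℝ => Complex.exp (Complex.I * p.1 * (x₀ - p.2)) := by
        fun_prop
      have hmeas : AEStronglyMeasurable (Function.uncurry fun (r x : ℝ) =>
          Complex.exp (Complex.I * r * (x₀ - x)) * f x)
          ((volume.restrict (Set.Ioc (a n) (b n))).prod ν) :=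
        hc.aestronglyMeasurable.mul hf.1.comp_snd
      have hprod : Integrable (fun z : ℝ × ℝ => (fun _ : ℝ => (1:ℝ)) z.1 * (fun x => ‖f x‖) z.2)
          ((volume.restrict (Set.Ioc (a n) (b n))).prod ν) :=
        Integrable.mul_prod (integrable_const 1) hf.norm
      refine Integrable.mono' hprod hmeas (Eventually.of_forall fun p => ?_)
      simp only [Function.uncurry, norm_mul, one_mul]
      have : ‖Complex.exp (Complex.I * p.1 * (x₀ - p.2))‖ = 1 := by
        rw [Complex.norm_exp]
        simp [Complex.mul_re]
      rw [this, one_mul]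
    have hswap : (∫ r in Set.Ioc (a n) (b n), ∫ x,
          Complex.exp (Complex.I * r * (x₀ - x)) * f x ∂ν)
        = ∫ x, (∫ r in Set.Ioc (a n) (b n),
            Complex.exp (Complex.I * r * (x₀ - x)) * f x) ∂ν :=
      integral_integral_swap hint
    rw [intervalIntegral.integral_congr (fun r _ => inner r),
      intervalIntegral.integral_of_le (hab n), hswap, ← integral_const_mul]
    refine integral_congr_ae (Eventually.of_forall fun x => ?_)
    show (1 / ((b n - a n : ℝ) : ℂ)) * ∫ r in Set.Ioc (a n) (b n),
        Complex.exp (Complex.I * r * (x₀ - x)) * f x = g n x * f x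
    rw [integral_mul_const]
    simp only [hgdef]
    rw [intervalIntegral.integral_of_le (hab n)]
    ring
  -- closed forms for g
  have gx0 : ∀ n, g n x₀ = (1 / ((b n - a n : ℝ) : ℂ)) * ((b n - a n : ℝ) : ℂ) := by
    intro n
    simp only [hgdef]
    congr 1
    have : ∀ r : ℝ, Complex.exp (Complex.I * r * ((x₀ : ℂ) - x₀)) = 1 := by
      intro r; simp
    rw [intervalIntegral.integral_congr (g := fun _ => (1 : ℂ)) (fun r _ => this r)]
    simp
  have gform : ∀ n, ∀ x : ℝ, x ≠ x₀ → g n x =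
      (1 / ((b n - a n : ℝ) : ℂ)) *
        ((Complex.exp (Complex.I * ((x₀ : ℂ) - x) * (b n)) -
          Complex.exp (Complex.I * ((x₀ : ℂ) - x) * (a n))) / (Complex.I * ((x₀ : ℂ) - x))) := by
    intro n x hx
    have hne : ((x₀ : ℂ) - x) ≠ 0 := by
      have : ((x₀ - x : ℝ) : ℂ) ≠ 0 := by
        exact_mod_cast sub_ne_zero.2 (Ne.symm hx)
      push_cast at this; exact this
    have hc : Complex.I * ((x₀ : ℂ) - x) ≠ 0 := mul_ne_zero Complex.I_ne_zero hne
    simp only [hgdef]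
    congr 1
    rw [intervalIntegral.integral_congr
      (g := fun r : ℝ => Complex.exp ((Complex.I * ((x₀ : ℂ) - x)) * r))
      (fun r _ => by ring_nf)]
    rw [integral_exp_mul_complex hc]
  -- norms of the exponentials are 1
  have hnorm1 : ∀ s t u : ℝ, ‖Complex.exp (Complex.I * ((s : ℂ) - t) * (u : ℝ))‖ = 1 := by
    intro s t u
    rw [Complex.norm_exp]
    simp [Complex.mul_re, Complex.mul_im]
  -- measurability of g n
  have gmeas : ∀ n, Measurable (g n) := by
    intro n
    have heq : g n = Set.piecewise ({x₀} : Set ℝ)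
        (fun _ => (1 / ((b n - a n : ℝ) : ℂ)) * ((b n - a n : ℝ) : ℂ))
        (fun x => (1 / ((b n - a n : ℝ) : ℂ)) *
          ((Complex.exp (Complex.I * ((x₀ : ℂ) - x) * (b n)) -
            Complex.exp (Complex.I * ((x₀ : ℂ) - x) * (a n))) /
              (Complex.I * ((x₀ : ℂ) - x)))) := by
      funext x
      by_cases hx : x = x₀
      · subst hx
        rw [Set.piecewise_eq_of_mem _ _ _ (Set.mem_singleton x)]
        exact gx0 n
      · rw [Set.piecewise_eq_of_notMem _ _ _ (by simpa using hx)]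
        exact gform n x hx
    rw [heq]
    refine Measurable.piecewise (measurableSet_singleton x₀) measurable_const ?_
    fun_prop
  have hl1 : ∀ᶠ n in atTop, 1 ≤ b n - a n := hl.eventually_ge_atTop 1
  have hinv : ∀ n, 1 ≤ b n - a n → ‖(1 / ((b n - a n : ℝ) : ℂ))‖ = (b n - a n)⁻¹ := by
    intro n hn
    have hlp : (0:ℝ) < b n - a n := lt_of_lt_of_le one_pos hn
    rw [show ((1 : ℂ) / ((b n - a n : ℝ) : ℂ)) = (((b n - a n)⁻¹ : ℝ) : ℂ) by push_cast; ring,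
      Complex.norm_real, Real.norm_eq_abs, abs_of_pos (by positivity)]
  have hbnd : ∀ n, 1 ≤ b n - a n → ∀ x : ℝ, ‖g n x‖ ≤ 1 := by
    intro n hn x
    have hlp : (0:ℝ) < b n - a n := lt_of_lt_of_le one_pos hn
    have h2 : ‖∫ r in a n..b n, Complex.exp (Complex.I * r * ((x₀ : ℂ) - x))‖
        ≤ 1 * |b n - a n| := by
      refine intervalIntegral.norm_integral_le_of_norm_le_const fun r _ => ?_
      rw [show Complex.I * (r : ℂ) * ((x₀ : ℂ) - x)
          = Complex.I * ((x₀ : ℂ) - x) * (r : ℝ) by push_cast; ring, hnorm1]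
    simp only [hgdef]
    rw [norm_mul, hinv n hn]
    calc (b n - a n)⁻¹ * ‖∫ r in a n..b n, Complex.exp (Complex.I * r * ((x₀ : ℂ) - x))‖
        ≤ (b n - a n)⁻¹ * (1 * |b n - a n|) := by gcongr
      _ = 1 := by rw [one_mul, abs_of_pos hlp, inv_mul_cancel₀ hlp.ne']
  have hind : (∫ x in ({x₀} : Set ℝ), f x ∂ν)
      = ∫ x, Set.indicator ({x₀} : Set ℝ) f x ∂ν :=
    (integral_indicator (measurableSet_singleton x₀)).symm
  rw [hind]
  simp only [key]
  refine tendsto_integral_filter_of_dominated_convergence (fun x => ‖f x‖)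
    (Eventually.of_forall fun n => ((gmeas n).aestronglyMeasurable.mul hf.1)) ?_ hf.norm ?_
  · filter_upwards [hl1] with n hn
    refine Eventually.of_forall fun x => ?_
    rw [norm_mul]
    calc ‖g n x‖ * ‖f x‖ ≤ 1 * ‖f x‖ :=
          mul_le_mul_of_nonneg_right (hbnd n hn x) (norm_nonneg _)
      _ = ‖f x‖ := one_mul _
  · refine Eventually.of_forall fun x => ?_
    by_cases hx : x = x₀
    · subst hx
      have heq : ∀ᶠ n in atTop, g n x * f x = Set.indicator ({x} : Set ℝ) f x := by
        filter_upwards [hl1] with n hn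
        have hlp : ((b n - a n : ℝ) : ℂ) ≠ 0 := by
          exact_mod_cast ne_of_gt (lt_of_lt_of_le one_pos hn)
        rw [gx0, one_div, inv_mul_cancel₀ hlp, one_mul,
          Set.indicator_of_mem (Set.mem_singleton x)]
      exact Tendsto.congr' (EventuallyEq.symm heq) tendsto_const_nhds
    · rw [Set.indicator_of_notMem (by simpa using hx)]
      have hne : ((x₀ : ℂ) - x) ≠ 0 := by
        have : ((x₀ - x : ℝ) : ℂ) ≠ 0 := by
          exact_mod_cast sub_ne_zero.2 (Ne.symm hx)
        push_cast at this; exact this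
      have hc : Complex.I * ((x₀ : ℂ) - x) ≠ 0 := mul_ne_zero Complex.I_ne_zero hne
      have hcpos : (0:ℝ) < ‖Complex.I * ((x₀ : ℂ) - x)‖ := norm_pos_iff.2 hc
      have hg0 : Tendsto (fun n => g n x) atTop (nhds 0) := by
        have hB : Tendsto (fun n => (b n - a n)⁻¹ * (2 / ‖Complex.I * ((x₀ : ℂ) - x)‖))
            atTop (nhds 0) := by
          simpa using (tendsto_inv_atTop_zero.comp hl).mul_const
            (2 / ‖Complex.I * ((x₀ : ℂ) - x)‖)
        refine squeeze_zero_norm' ?_ hB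
        filter_upwards [hl1] with n hn
        rw [gform n x hx, norm_mul, hinv n hn, norm_div]
        have hnum : ‖Complex.exp (Complex.I * ((x₀ : ℂ) - x) * (b n)) -
            Complex.exp (Complex.I * ((x₀ : ℂ) - x) * (a n))‖ ≤ 2 := by
          refine le_trans (norm_sub_le _ _) ?_
          rw [hnorm1, hnorm1]; norm_num
        gcongr
      simpa using hg0.mul_const (f x)
end

section
/- Let φ : ℝ → ℂ be a continuous even function (φ(-r) = φ(r)) such that there exist x₀ ∈ ℝ \ {0} and c ∈ ℂ \ {0} with lim_{r→∞} φ(r) e^{i r x₀} = c. Then φ is not the Fourier–Stieltjes transform of any finite complex regular Borel measure on ℝ, i.e. there is no finite complex measure μ on ℝ with φ(r) = ∫ e^{-irx} dμ(x) for all r. -/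
open MeasureTheory Filter Complex

/-- The averaged oscillation kernel `J T a = T⁻¹ ∫₀ᵀ e^{ira} dr`. -/
noncomputable def Jfun (T a : ℝ) : ℂ :=
  (T : ℂ)⁻¹ * ∫ r in (0:ℝ)..T, Complex.exp (Complex.I * r * a)

lemma norm_exp_I_mul (r a : ℝ) : ‖Complex.exp (Complex.I * r * a)‖ = 1 := by
  rw [show (Complex.I * (r:ℂ) * (a:ℂ)) = (((r * a : ℝ)):ℂ) * Complex.I by push_cast; ring]
  exact Complex.norm_exp_ofReal_mul_I _

lemma J_zero {T : ℝ} (hT : T ≠ 0) : Jfun T 0 = 1 := by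
  simp only [Jfun, Complex.ofReal_zero, mul_zero, Complex.exp_zero,
    intervalIntegral.integral_const, sub_zero, Complex.real_smul, mul_one]
  rw [inv_mul_cancel₀ (by exact_mod_cast hT)]

lemma J_eq {T a : ℝ} (ha : a ≠ 0) :
    Jfun T a = (T : ℂ)⁻¹ * ((Complex.exp (Complex.I * a * T) - 1) / (Complex.I * a)) := by
  have hca : (Complex.I * (a:ℂ)) ≠ 0 := by
    simp [Complex.I_ne_zero, Complex.ofReal_eq_zero, ha]
  have h1 : ∀ r : ℝ, Complex.I * (r:ℂ) * (a:ℂ) = (Complex.I * a) * (r:ℂ) := by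
    intro r; ring
  rw [Jfun]
  simp only [h1]
  rw [integral_exp_mul_complex hca]
  simp

lemma J_norm_le {T : ℝ} (hT : 0 < T) (a : ℝ) : ‖Jfun T a‖ ≤ 1 := by
  have h1 : ‖∫ r in (0:ℝ)..T, Complex.exp (Complex.I * r * a)‖ ≤ 1 * |T - 0| :=
    intervalIntegral.norm_integral_le_of_norm_le_const fun x _ => (norm_exp_I_mul x a).le
  rw [Jfun, norm_mul, norm_inv, Complex.norm_real, Real.norm_of_nonneg hT.le]
  rw [one_mul, sub_zero, abs_of_pos hT] at h1
  calc T⁻¹ * ‖∫ r in (0:ℝ)..T, Complex.exp (Complex.I * r * a)‖ ≤ T⁻¹ * T := by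
        exact mul_le_mul_of_nonneg_left h1 (by positivity)
    _ = 1 := inv_mul_cancel₀ hT.ne'

lemma J_tendsto (a : ℝ) :
    Tendsto (fun T => Jfun T a) atTop (nhds (if a = 0 then (1:ℂ) else 0)) := by
  by_cases ha : a = 0
  · subst ha
    simp only [if_pos rfl]
    have : ∀ᶠ T : ℝ in atTop, Jfun T 0 = 1 := by
      filter_upwards [eventually_gt_atTop (0:ℝ)] with T hT
      exact J_zero hT.ne'
    exact tendsto_const_nhds.congr' (this.mono fun T h => h.symm)
  · simp only [if_neg ha]
    apply squeeze_zero_norm' (a := fun T : ℝ => T⁻¹ * (2 / |a|))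
    · filter_upwards [eventually_gt_atTop (0:ℝ)] with T hT
      rw [J_eq ha, norm_mul, norm_inv, Complex.norm_real, Real.norm_of_nonneg hT.le,
        norm_div]
      apply mul_le_mul_of_nonneg_left _ (by positivity)
      have h2 : ‖Complex.exp (Complex.I * a * T) - 1‖ ≤ 2 := by
        calc ‖Complex.exp (Complex.I * a * T) - 1‖
            ≤ ‖Complex.exp (Complex.I * a * T)‖ + ‖(1:ℂ)‖ := norm_sub_le _ _
          _ ≤ 2 := by
              rw [show Complex.I * (a:ℂ) * (T:ℂ) = (((a * T : ℝ)):ℂ) * Complex.I by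
                push_cast; ring, Complex.norm_exp_ofReal_mul_I]
              norm_num
      have h3 : ‖Complex.I * (a:ℂ)‖ = |a| := by
        rw [norm_mul, Complex.norm_I, one_mul, Complex.norm_real, Real.norm_eq_abs]
      rw [h3]
      exact div_le_div_of_nonneg_right h2 (by positivity) |>.trans_eq rfl
    · have := tendsto_inv_atTop_zero (𝕜 := ℝ)
      simpa using this.mul_const (2 / |a|)

/-- The Cesàro average of a convergent continuous function converges to the same limit. -/
lemma cesaro {h : ℝ → ℂ} (hct : Continuous h) {c : ℂ} (hl : Tendsto h atTop (nhds c)) :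
    Tendsto (fun T : ℝ => (T : ℂ)⁻¹ * ∫ r in (0:ℝ)..T, h r) atTop (nhds c) := by
  rw [Metric.tendsto_atTop]
  intro ε hε
  obtain ⟨R₀, hR₀⟩ := (Metric.tendsto_atTop.mp hl) (ε/3) (by positivity)
  set R : ℝ := max R₀ 0 with hRdef
  have hRnn : 0 ≤ R := le_max_right _ _
  have hbd : ∀ r ≥ R, ‖h r - c‖ ≤ ε/3 := by
    intro r hr
    have := hR₀ r (le_trans (le_max_left _ _) hr)
    rw [dist_eq_norm] at this
    exact this.le
  set M : ℝ := ‖∫ r in (0:ℝ)..R, (h r - c)‖ with hMdef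
  have hMnn : 0 ≤ M := norm_nonneg _
  refine ⟨max (R + 1) (3*M/ε + 1), fun T hT => ?_⟩
  have hTR : R + 1 ≤ T := le_trans (le_max_left _ _) hT
  have hTM : 3*M/ε + 1 ≤ T := le_trans (le_max_right _ _) hT
  have hT0 : 0 < T := lt_of_lt_of_le (by linarith) hTR
  have hTne : (T:ℂ) ≠ 0 := by exact_mod_cast hT0.ne'
  have hint1 : IntervalIntegrable (fun r => h r - c) volume 0 T :=
    (hct.sub continuous_const).intervalIntegrable _ _
  have e1 : ∫ r in (0:ℝ)..T, (h r - c) = (∫ r in (0:ℝ)..T, h r) - (T:ℂ) * c := by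
    rw [intervalIntegral.integral_sub (hct.intervalIntegrable _ _)
      (intervalIntegrable_const), intervalIntegral.integral_const, sub_zero,
      Complex.real_smul]
  have e2 : (T:ℂ)⁻¹ * (∫ r in (0:ℝ)..T, h r) - c
      = (T:ℂ)⁻¹ * ∫ r in (0:ℝ)..T, (h r - c) := by
    rw [e1, mul_sub, ← mul_assoc, inv_mul_cancel₀ hTne, one_mul]
  have hsplit : ∫ r in (0:ℝ)..T, (h r - c)
      = (∫ r in (0:ℝ)..R, (h r - c)) + ∫ r in R..T, (h r - c) :=
    (intervalIntegral.integral_add_adjacent_intervals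
      ((hct.sub continuous_const).intervalIntegrable _ _)
      ((hct.sub continuous_const).intervalIntegrable _ _)).symm
  have hRT : R ≤ T := by linarith
  have hb2 : ‖∫ r in R..T, (h r - c)‖ ≤ ε/3 * (T - R) := by
    have := intervalIntegral.norm_integral_le_of_norm_le_const
      (C := ε/3) (f := fun r => h r - c) (a := R) (b := T) ?_
    · rwa [_root_.abs_of_nonneg (by linarith)] at this
    · intro x hx
      rw [Set.uIoc_of_le hRT] at hx
      exact hbd x hx.1.le
  have hnormle : ‖∫ r in (0:ℝ)..T, (h r - c)‖ ≤ M + ε/3 * (T - R) := by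
    rw [hsplit]
    exact (norm_add_le _ _).trans (add_le_add le_rfl hb2)
  have h3M : 3*M ≤ (T - 1) * ε := by
    have := (div_le_iff₀ hε).mp (by linarith : 3*M/ε ≤ T - 1)
    linarith
  rw [dist_eq_norm, e2, norm_mul, norm_inv, Complex.norm_real,
    Real.norm_of_nonneg hT0.le]
  calc T⁻¹ * ‖∫ r in (0:ℝ)..T, (h r - c)‖
      ≤ T⁻¹ * (M + ε/3 * (T - R)) :=
        mul_le_mul_of_nonneg_left hnormle (by positivity)
    _ ≤ 2*ε/3 := by
        rw [inv_mul_le_iff₀ hT0]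
        nlinarith [mul_nonneg hε.le hRnn]
    _ < ε := by linarith

lemma J_measurable {T : ℝ} (hT : T ≠ 0) : Measurable fun a : ℝ => Jfun T a := by
  have heq : (fun a : ℝ => Jfun T a) = fun a : ℝ =>
      if a = 0 then 1 else
        (T : ℂ)⁻¹ * ((Complex.exp (Complex.I * a * T) - 1) / (Complex.I * a)) := by
    funext a
    by_cases ha : a = 0
    · rw [ha, if_pos rfl, J_zero hT]
    · rw [if_neg ha, J_eq ha]
  rw [heq]
  apply Measurable.ite (by simp [measurableSet_eq])
  · exact measurable_const
  · apply Measurable.const_mul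
    apply Measurable.div
    · exact ((Complex.continuous_exp.comp (by fun_prop)).sub continuous_const).measurable
    · fun_prop

/-- Key lemma: Cesàro average of a "Fourier type" integral converges to the mass of the
zero set of the phase. -/
lemma key {ν : Measure ℝ} [IsFiniteMeasure ν] {f : ℝ → ℂ} (hf : Integrable f ν)
    {u : ℝ → ℝ} (hu : Continuous u) {ψ : ℝ → ℂ}
    (hψ : ∀ r : ℝ, ψ r = ∫ x, Complex.exp (Complex.I * r * (u x : ℂ)) * f x ∂ν) :
    Tendsto (fun T : ℝ => (T:ℂ)⁻¹ * ∫ r in (0:ℝ)..T, ψ r) atTop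
      (nhds (∫ x, Set.indicator {x | u x = 0} f x ∂ν)) := by
  have hG : Tendsto (fun T : ℝ => ∫ x, Jfun T (u x) * f x ∂ν) atTop
      (nhds (∫ x, Set.indicator {x | u x = 0} f x ∂ν)) := by
    apply tendsto_integral_filter_of_dominated_convergence (fun x => ‖f x‖)
    · filter_upwards [eventually_gt_atTop (0:ℝ)] with T hT
      exact (((J_measurable hT.ne').comp hu.measurable).aestronglyMeasurable).mul hf.1
    · filter_upwards [eventually_gt_atTop (0:ℝ)] with T hT
      refine Eventually.of_forall fun x => ?_
      rw [norm_mul]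
      exact mul_le_of_le_one_left (norm_nonneg _) (J_norm_le hT _)
    · exact hf.norm
    · refine Eventually.of_forall fun x => ?_
      have := (J_tendsto (u x)).mul_const (f x)
      have heq : (if u x = 0 then (1:ℂ) else 0) * f x
          = Set.indicator {x | u x = 0} f x := by
        by_cases h : u x = 0 <;> simp [Set.indicator_apply, h]
      rwa [heq] at this
  apply hG.congr'
  filter_upwards [eventually_gt_atTop (0:ℝ)] with T hT
  symm
  -- product integrability
  have hm : AEStronglyMeasurable
      (fun p : ℝ × ℝ => Complex.exp (Complex.I * p.1 * (u p.2 : ℂ)) * f p.2)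
      (((volume : Measure ℝ).restrict (Set.Ioc 0 T)).prod ν) :=
    ((Complex.continuous_exp.comp (by fun_prop :
      Continuous fun p : ℝ × ℝ => Complex.I * p.1 * (u p.2 : ℂ))).aestronglyMeasurable).mul
      hf.1.comp_snd
  have hprod : Integrable
      (Function.uncurry fun r x : ℝ => Complex.exp (Complex.I * r * (u x : ℂ)) * f x)
      (((volume : Measure ℝ).restrict (Set.Ioc 0 T)).prod ν) := by
    refine (integrable_prod_iff ?_).mpr ⟨?_, ?_⟩
    · exact hm
    · refine Eventually.of_forall fun r => ?_
      simp only [Function.uncurry_apply_pair]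
      exact hf.bdd_mul
        ((Complex.continuous_exp.comp (by fun_prop :
          Continuous fun x : ℝ => Complex.I * r * (u x : ℂ))).aestronglyMeasurable)
        (Eventually.of_forall fun x => (norm_exp_I_mul r (u x)).le)
    · simp only [Function.uncurry_apply_pair]
      have heqn : (fun r : ℝ => ∫ x, ‖Complex.exp (Complex.I * r * (u x : ℂ)) * f x‖ ∂ν)
          = fun _ : ℝ => ∫ x, ‖f x‖ ∂ν := by
        funext r
        congr 1
        funext x
        rw [norm_mul, norm_exp_I_mul, one_mul]
      rw [heqn]
      exact (integrableOn_const_iff).mpr (Or.inr measure_Ioc_lt_top)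
  have hswap := integral_integral_swap hprod
  -- now compute
  have e1 : ∫ r in (0:ℝ)..T, ψ r
      = ∫ r in Set.Ioc (0:ℝ) T, ψ r ∂volume := by
    rw [intervalIntegral.integral_of_le hT.le]
  have e2 : ∫ r in Set.Ioc (0:ℝ) T, ψ r ∂volume
      = ∫ x, (∫ r in Set.Ioc (0:ℝ) T, Complex.exp (Complex.I * r * (u x : ℂ)) ∂volume)
          * f x ∂ν := by
    rw [show ψ = fun r : ℝ => ∫ x, Complex.exp (Complex.I * r * (u x : ℂ)) * f x ∂ν
      from funext hψ]
    rw [hswap]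
    congr 1
    funext x
    rw [integral_mul_const]
  have e3 : ∀ x : ℝ, ∫ r in Set.Ioc (0:ℝ) T, Complex.exp (Complex.I * r * (u x : ℂ)) ∂volume
      = ∫ r in (0:ℝ)..T, Complex.exp (Complex.I * r * (u x : ℂ)) := by
    intro x
    rw [intervalIntegral.integral_of_le hT.le]
  calc (T:ℂ)⁻¹ * ∫ r in (0:ℝ)..T, ψ r
      = (T:ℂ)⁻¹ * ∫ x, (∫ r in (0:ℝ)..T, Complex.exp (Complex.I * r * (u x : ℂ))) * f x ∂ν := by
        rw [e1, e2]
        congr 1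
        congr 1
        funext x
        rw [e3]
    _ = ∫ x, Jfun T (u x) * f x ∂ν := by
        rw [← integral_const_mul]
        congr 1
        funext x
        rw [Jfun, mul_assoc]

/-- A continuous even function `φ : ℝ → ℂ` with
`lim_{r→∞} φ(r) e^{irx₀} = c ≠ 0` for some `x₀ ≠ 0` is not the Fourier–Stieltjes
transform of any finite complex regular Borel measure on ℝ (such a measure being
represented as an integrable density `f` against a finite regular positive measure `ν`). -/
theorem stmt1 (φ : ℝ → ℂ) (hcont : Continuous φ) (hsym : ∀ r, φ (-r) = φ r)
    (x₀ : ℝ) (hx₀ : x₀ ≠ 0) (c : ℂ) (hc : c ≠ 0)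
    (hlim : Tendsto (fun r => φ r * Complex.exp (Complex.I * r * x₀)) atTop (nhds c)) :
    ¬ ∃ (ν : Measure ℝ) (f : ℝ → ℂ), IsFiniteMeasure ν ∧ ν.Regular ∧ Integrable f ν ∧
        ∀ r : ℝ, φ r = ∫ x, Complex.exp (-(Complex.I * r * x)) * f x ∂ν := by
  rintro ⟨ν, f, hfin, hreg, hint, hrep⟩
  set g : ℝ → ℂ := fun r => φ r * Complex.exp (Complex.I * r * x₀) with hg
  have hgcont : Continuous g := hcont.mul (Complex.continuous_exp.comp (by fun_prop))
  -- representation 1 : g r = ∫ exp(I r (x₀ - x)) f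
  have hrep1 : ∀ r : ℝ, g r
      = ∫ x, Complex.exp (Complex.I * r * ((x₀ - x : ℝ) : ℂ)) * f x ∂ν := by
    intro r
    show φ r * Complex.exp (Complex.I * r * x₀) = _
    rw [hrep r, ← integral_mul_const]
    congr 1
    funext x
    rw [mul_right_comm, ← Complex.exp_add]
    congr 2
    push_cast
    ring
  -- representation 2 : φ r * exp(-(I r x₀)) = ∫ exp(I r (x - x₀)) f
  have hrep2 : ∀ r : ℝ, φ r * Complex.exp (-(Complex.I * r * x₀))
      = ∫ x, Complex.exp (Complex.I * r * ((x - x₀ : ℝ) : ℂ)) * f x ∂ν := by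
    intro r
    have h1 : φ r = ∫ x, Complex.exp (Complex.I * r * (x : ℂ)) * f x ∂ν := by
      rw [← hsym r, hrep (-r)]
      congr 1
      funext x
      congr 1
      push_cast
      ring
    rw [h1, ← integral_mul_const]
    congr 1
    funext x
    rw [mul_right_comm, ← Complex.exp_add]
    congr 2
    push_cast
    ring
  have hu1 := key hint (by fun_prop : Continuous fun x : ℝ => x₀ - x) hrep1
  have hu2 := key hint (by fun_prop : Continuous fun x : ℝ => x - x₀) hrep2
  have hsets : {x : ℝ | x₀ - x = 0} = {x : ℝ | x - x₀ = 0} := by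
    ext x
    simp [sub_eq_zero, eq_comm]
  -- Limit 1 : the Cesàro mean of g tends to c
  have hc1 : (∫ x, Set.indicator {x : ℝ | x₀ - x = 0} f x ∂ν) = c :=
    tendsto_nhds_unique hu1 (cesaro hgcont hlim)
  -- Limit 2 : the Cesàro mean of φ r exp(-I r x₀) tends to 0
  have hE : ∀ r : ℝ, Complex.exp (Complex.I * r * x₀)
      * Complex.exp (Complex.I * r * ((-2*x₀ : ℝ) : ℂ))
      = Complex.exp (-(Complex.I * r * x₀)) := by
    intro r
    rw [← Complex.exp_add]
    congr 1
    push_cast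
    ring
  have hA0 : Tendsto (fun r : ℝ => (g r - c) * Complex.exp (Complex.I * r * ((-2*x₀ : ℝ) : ℂ)))
      atTop (nhds 0) := by
    apply squeeze_zero_norm' (a := fun r => ‖g r - c‖)
    · refine Eventually.of_forall fun r => ?_
      rw [norm_mul, norm_exp_I_mul, mul_one]
    · have h0 : Tendsto (fun r => g r - c) atTop (nhds 0) := by
        simpa using hlim.sub (tendsto_const_nhds (x := c))
      simpa using h0.norm
  have hA := cesaro (h := fun r : ℝ => (g r - c) * Complex.exp (Complex.I * r * ((-2*x₀ : ℝ) : ℂ)))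
    (by exact (hgcont.sub continuous_const).mul (Complex.continuous_exp.comp (by fun_prop))) hA0
  have hB : Tendsto (fun T : ℝ => c * Jfun T (-2*x₀)) atTop (nhds 0) := by
    have := (J_tendsto (-2*x₀)).const_mul c
    rw [if_neg (by simpa using hx₀), mul_zero] at this
    exact this
  have htot : Tendsto (fun T : ℝ => (T:ℂ)⁻¹ * ∫ r in (0:ℝ)..T,
      φ r * Complex.exp (-(Complex.I * r * x₀))) atTop (nhds 0) := by
    have hsum := hA.add hB
    rw [add_zero] at hsum
    apply Tendsto.congr _ hsum
    intro T
    have hint1 : IntervalIntegrable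
        (fun r => (g r - c) * Complex.exp (Complex.I * r * ((-2*x₀ : ℝ) : ℂ))) volume 0 T :=
      (((hgcont.sub continuous_const).mul
        (Complex.continuous_exp.comp (by fun_prop)))).intervalIntegrable _ _
    have hint2 : IntervalIntegrable
        (fun r => c * Complex.exp (Complex.I * r * ((-2*x₀ : ℝ) : ℂ))) volume 0 T :=
      (continuous_const.mul (Complex.continuous_exp.comp (by fun_prop))).intervalIntegrable _ _
    have heq : ∀ r : ℝ, φ r * Complex.exp (-(Complex.I * r * x₀))
        = (g r - c) * Complex.exp (Complex.I * r * ((-2*x₀ : ℝ) : ℂ))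
          + c * Complex.exp (Complex.I * r * ((-2*x₀ : ℝ) : ℂ)) := by
      intro r
      have : (g r - c) * Complex.exp (Complex.I * r * ((-2*x₀ : ℝ) : ℂ))
          + c * Complex.exp (Complex.I * r * ((-2*x₀ : ℝ) : ℂ))
          = g r * Complex.exp (Complex.I * r * ((-2*x₀ : ℝ) : ℂ)) := by ring
      rw [this]
      show φ r * Complex.exp (-(Complex.I * r * x₀))
        = φ r * Complex.exp (Complex.I * r * x₀)
          * Complex.exp (Complex.I * r * ((-2*x₀ : ℝ) : ℂ))
      rw [mul_assoc (φ r), hE r]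
    calc ((T:ℂ)⁻¹ * ∫ r in (0:ℝ)..T, (g r - c) * Complex.exp (Complex.I * r * ((-2*x₀ : ℝ) : ℂ)))
          + c * Jfun T (-2*x₀)
        = (T:ℂ)⁻¹ * ((∫ r in (0:ℝ)..T, (g r - c) * Complex.exp (Complex.I * r * ((-2*x₀:ℝ):ℂ)))
            + ∫ r in (0:ℝ)..T, c * Complex.exp (Complex.I * r * ((-2*x₀:ℝ):ℂ))) := by
          rw [mul_add]
          congr 1
          rw [Jfun, intervalIntegral.integral_const_mul]
          ring
      _ = (T:ℂ)⁻¹ * ∫ r in (0:ℝ)..T, φ r * Complex.exp (-(Complex.I * r * x₀)) := by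
          rw [← intervalIntegral.integral_add hint1 hint2]
          congr 1
          apply intervalIntegral.integral_congr
          intro r _
          exact (heq r).symm
  have hc2 : (∫ x, Set.indicator {x : ℝ | x - x₀ = 0} f x ∂ν) = 0 :=
    tendsto_nhds_unique hu2 htot
  apply hc
  rw [← hc1, hsets, hc2]
end

section
/- For ν, μ, ρ ∈ ℂ with Re(1 ± ν ± μ - ρ) > 0 (all four sign combinations), one has 2^{ρ+2} Γ(1 - ρ) ∫_0^∞ K_ν(r) K_μ(r) r^{-ρ} dr = Γ((1+ν+μ-ρ)/2) Γ((1+ν-μ-ρ)/2) Γ((1-ν+μ-ρ)/2) Γ((1-ν-μ-ρ)/2). -/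
open MeasureTheory Complex

/-- The modified Bessel function of the second kind, via its integral representation
`K_ν(z) = ∫_0^∞ e^{-z cosh t} cosh(ν t) dt` (for `z > 0`). -/
noncomputable def besselK (ν : ℂ) (z : ℝ) : ℂ :=
  ∫ t in Set.Ioi (0 : ℝ), Complex.exp (-(z : ℂ) * Real.cosh t) * Complex.cosh (ν * t)

open Set

lemma cosh_ge_exp_abs (x : ℝ) : Real.exp |x| / 2 ≤ Real.cosh x := by
  rw [Real.cosh_eq]
  rcases abs_cases x with ⟨h, _⟩ | ⟨h, _⟩ <;> rw [h] <;>
    [linarith [Real.exp_pos (-x)]; linarith [Real.exp_pos x]]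

lemma sq_le_cosh (t : ℝ) : t ^ 2 / 8 ≤ Real.cosh t := by
  have h1 := cosh_ge_exp_abs t
  have h2 := Real.add_one_le_exp (|t| / 2)
  have h3 : Real.exp |t| = Real.exp (|t| / 2) * Real.exp (|t| / 2) := by
    rw [← Real.exp_add]; ring_nf
  nlinarith [_root_.sq_abs t, abs_nonneg t, Real.exp_pos (|t| / 2)]

lemma my_integrable_comp_abs {f : ℝ → ℝ} (hf : IntegrableOn f (Set.Ioi 0)) :
    Integrable (fun x => f |x|) := by
  have hIoi : IntegrableOn (fun x => f |x|) (Set.Ioi 0) :=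
    hf.congr_fun (fun x hx => by rw [abs_of_pos hx]) measurableSet_Ioi
  have hIic : IntegrableOn (fun x => f |x|) (Set.Iic 0) := by
    rw [← Measure.map_neg_eq_self (volume : Measure ℝ)]
    have m : MeasurableEmbedding fun x : ℝ => -x := (Homeomorph.neg ℝ).measurableEmbedding
    rw [m.integrableOn_map_iff]
    simp_rw [Function.comp_def, abs_neg, neg_preimage, neg_Iic, neg_zero]
    exact Iff.mpr integrableOn_Ici_iff_integrableOn_Ioi hIoi
  have := hIic.union hIoi
  rwa [Set.Iic_union_Ioi, integrableOn_univ] at this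

lemma integrable_exp_neg_abs {δ : ℝ} (hδ : 0 < δ) :
    Integrable (fun x : ℝ => Real.exp (-δ * |x|)) :=
  my_integrable_comp_abs (f := fun x => Real.exp (-δ * x)) (exp_neg_integrableOn_Ioi 0 hδ)

lemma integrable_exp_neg_abs2 {δ : ℝ} (hδ : 0 < δ) :
    Integrable (fun p : ℝ × ℝ => Real.exp (-δ * |p.1|) * Real.exp (-δ * |p.2|)) := by
  have := (integrable_exp_neg_abs hδ).mul_prod (integrable_exp_neg_abs hδ)
  rwa [← Measure.volume_eq_prod] at this

lemma cosh_rpow_mul_exp_le {σ b δ : ℝ} (hσ : σ ≤ 0) (h : |b| + δ ≤ -σ) (x : ℝ) :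
    Real.cosh x ^ σ * Real.exp (b * x) ≤ 2 ^ (-σ) * Real.exp (-δ * |x|) := by
  have h1 : Real.cosh x ^ σ ≤ (Real.exp |x| / 2) ^ σ :=
    Real.rpow_le_rpow_of_nonpos (by positivity) (cosh_ge_exp_abs x) hσ
  have h2 : (Real.exp |x| / 2) ^ σ = 2 ^ (-σ) * Real.exp (σ * |x|) := by
    rw [Real.div_rpow (Real.exp_pos _).le (by norm_num), ← Real.exp_mul,
      Real.rpow_neg (by norm_num : (0:ℝ) ≤ 2)]
    rw [mul_comm |x| σ, div_eq_mul_inv, mul_comm]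
  have h3 : Real.exp (b * x) ≤ Real.exp (|b| * |x|) := by
    apply Real.exp_le_exp.mpr
    calc b * x ≤ |b * x| := le_abs_self _
    _ = |b| * |x| := abs_mul b x
  have h4 : Real.exp (σ * |x|) * Real.exp (|b| * |x|) ≤ Real.exp (-δ * |x|) := by
    rw [← Real.exp_add]
    apply Real.exp_le_exp.mpr
    nlinarith [abs_nonneg x]
  calc Real.cosh x ^ σ * Real.exp (b * x)
      ≤ (2 ^ (-σ) * Real.exp (σ * |x|)) * Real.exp (|b| * |x|) := by
        rw [← h2]
        apply mul_le_mul h1 h3 (Real.exp_pos _).le (by positivity)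
    _ = 2 ^ (-σ) * (Real.exp (σ * |x|) * Real.exp (|b| * |x|)) := by ring
    _ ≤ 2 ^ (-σ) * Real.exp (-δ * |x|) := by
        apply mul_le_mul_of_nonneg_left h4 (by positivity)

lemma my_norm_exp (z : ℂ) : ‖Complex.exp z‖ = Real.exp z.re := Complex.norm_exp z


lemma norm_cpow_of_pos {x : ℝ} (hx : 0 < x) (w : ℂ) : ‖(x:ℂ) ^ w‖ = x ^ w.re := by
  rw [Complex.norm_cpow_eq_rpow_re_of_pos hx]

lemma norm_exp_mul_cosh_cpow (a w : ℂ) (x : ℝ) :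
    ‖Complex.exp (a * x) * (Real.cosh x : ℂ) ^ w‖
      = Real.exp (a.re * x) * Real.cosh x ^ w.re := by
  rw [norm_mul, my_norm_exp, norm_cpow_of_pos (Real.cosh_pos x), Complex.re_mul_ofReal]

lemma continuous_J (a w : ℂ) :
    Continuous fun x : ℝ => Complex.exp (a * x) * (Real.cosh x : ℂ) ^ w := by
  apply Continuous.mul
  · exact Complex.continuous_exp.comp (continuous_const.mul Complex.continuous_ofReal)
  · exact (Complex.continuous_ofReal.comp Real.continuous_cosh).cpow continuous_const
      (fun x => Complex.ofReal_mem_slitPlane.mpr (Real.cosh_pos x))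

lemma integrable_J {a w : ℂ} {δ : ℝ} (hσ : w.re ≤ 0) (h : |a.re| + δ ≤ -w.re) (hδ : 0 < δ) :
    Integrable (fun x : ℝ => Complex.exp (a * x) * (Real.cosh x : ℂ) ^ w) := by
  apply Integrable.mono' ((integrable_exp_neg_abs hδ).const_mul (2 ^ (-w.re)))
  · exact (continuous_J a w).aestronglyMeasurable
  · filter_upwards with x
    rw [norm_exp_mul_cosh_cpow, mul_comm]
    exact cosh_rpow_mul_exp_le hσ h x

lemma integrable_exp_sub_cosh {r b : ℝ} (hr : 0 < r) :
    Integrable (fun t : ℝ => Real.exp (b * t - r * Real.cosh t)) := by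
  set T := 8 * (|b| + 1) / r with hT
  set M := (|b| + 1) * T with hM
  have key : ∀ t : ℝ, b * t - r * Real.cosh t ≤ M + -1 * |t| := by
    intro t
    have habs : b * t ≤ |b| * |t| := (le_abs_self _).trans (abs_mul b t).le
    have hMnn : 0 ≤ M := by positivity
    rcases le_or_gt ((|b| + 1) * |t|) (r * Real.cosh t) with hc | hc
    · nlinarith [abs_nonneg t]
    · have h8 : r * (t ^ 2 / 8) ≤ r * Real.cosh t := by
        have := sq_le_cosh t
        nlinarith
      have ht : |t| ≤ T := by
        rcases eq_or_lt_of_le (abs_nonneg t) with h0 | h0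
        · rw [← h0]; positivity
        · rw [hT, le_div_iff₀ hr]
          nlinarith [_root_.sq_abs t]
      have : |b| * |t| ≤ |b| * T := mul_le_mul_of_nonneg_left ht (abs_nonneg b)
      nlinarith [Real.cosh_pos t]
  apply Integrable.mono' ((integrable_exp_neg_abs (by norm_num : (0:ℝ) < 1)).const_mul
    (Real.exp M))
  · exact (Real.continuous_exp.comp (by continuity)).aestronglyMeasurable
  · filter_upwards with t
    rw [Real.norm_eq_abs, abs_of_pos (Real.exp_pos _), ← Real.exp_add]
    exact Real.exp_le_exp.mpr (key t)

lemma integrable_exp_cosh_complex {r : ℝ} (hr : 0 < r) (a : ℂ) :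
    Integrable (fun t : ℝ => Complex.exp (-(r:ℂ) * Real.cosh t) * Complex.exp (a * t)) := by
  apply Integrable.mono' (integrable_exp_sub_cosh (b := a.re) hr)
  · apply Continuous.aestronglyMeasurable
    exact (Complex.continuous_exp.comp (continuous_const.mul
      (Complex.continuous_ofReal.comp Real.continuous_cosh))).mul
      (Complex.continuous_exp.comp (continuous_const.mul Complex.continuous_ofReal))
  · filter_upwards with t
    rw [norm_mul, my_norm_exp, my_norm_exp, re_mul_ofReal, ← Real.exp_add]
    apply Real.exp_le_exp.mpr
    simp [Complex.re_mul_ofReal]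


lemma cosh_add_cosh (t u : ℝ) : Real.cosh t + Real.cosh u
    = 2 * (Real.cosh ((t + u) / 2) * Real.cosh ((t - u) / 2)) := by
  have h1 := Real.cosh_add ((t + u) / 2) ((t - u) / 2)
  have h2 := Real.cosh_sub ((t + u) / 2) ((t - u) / 2)
  have e1 : (t + u) / 2 + (t - u) / 2 = t := by ring
  have e2 : (t + u) / 2 - (t - u) / 2 = u := by ring
  rw [e1] at h1; rw [e2] at h2; linarith

lemma besselK_eq_half (ν : ℂ) {r : ℝ} (hr : 0 < r) :
    besselK ν r
      = (1 / 2 : ℂ) * ∫ t : ℝ, Complex.exp (-(r:ℂ) * Real.cosh t) * Complex.exp (ν * t) := by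
  have hint := integrable_exp_cosh_complex hr ν
  have hintneg := integrable_exp_cosh_complex hr (-ν)
  have split : (∫ t : ℝ, Complex.exp (-(r:ℂ) * Real.cosh t) * Complex.exp (ν * t))
      = (∫ t in Set.Iic (0:ℝ), Complex.exp (-(r:ℂ) * Real.cosh t) * Complex.exp (ν * t))
        + ∫ t in Set.Ioi (0:ℝ), Complex.exp (-(r:ℂ) * Real.cosh t) * Complex.exp (ν * t) :=
    (intervalIntegral.integral_Iic_add_Ioi hint.integrableOn hint.integrableOn).symm
  have refl : (∫ t in Set.Iic (0:ℝ), Complex.exp (-(r:ℂ) * Real.cosh t) * Complex.exp (ν * t))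
      = ∫ t in Set.Ioi (0:ℝ), Complex.exp (-(r:ℂ) * Real.cosh t) * Complex.exp (-ν * t) := by
    rw [show Set.Iic (0:ℝ) = Set.Iic (-(0:ℝ)) by norm_num,
      ← integral_comp_neg_Ioi (0:ℝ) (fun t => Complex.exp (-(r:ℂ) * Real.cosh t)
        * Complex.exp (ν * t))]
    apply setIntegral_congr_fun measurableSet_Ioi
    intro t _
    simp only [Real.cosh_neg, Complex.ofReal_neg, mul_neg, neg_mul, neg_neg]
  rw [split, refl, ← integral_add hintneg.integrableOn hint.integrableOn]
  rw [besselK, ← integral_const_mul]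
  apply setIntegral_congr_fun measurableSet_Ioi
  intro t _
  show Complex.exp (-(r:ℂ) * Real.cosh t) * Complex.cosh (ν * t) = _
  have hc : Complex.cosh (ν * t) = (Complex.exp (ν * t) + Complex.exp (-(ν * t))) / 2 := rfl
  rw [hc]
  rw [show -(ν * (t:ℂ)) = -ν * t by ring]
  ring

lemma mellin_exp {ρ : ℂ} (hρ : 0 < (1 - ρ).re) {c : ℝ} (hc : 0 < c) :
    ∫ r in Set.Ioi (0:ℝ), (r:ℂ) ^ (-ρ) * Complex.exp (-((c:ℂ) * r))
      = Complex.Gamma (1 - ρ) * (c:ℂ) ^ (ρ - 1) := by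
  have h := integral_cpow_mul_exp_neg_mul_Ioi hρ hc
  rw [show (1:ℂ) - ρ - 1 = -ρ by ring] at h
  rw [h, mul_comm]
  congr 1
  rw [one_div,
    Complex.inv_cpow _ _ (by rw [Complex.arg_ofReal_of_nonneg hc.le]; exact Real.pi_ne_zero.symm),
    ← Complex.cpow_neg]
  congr 1
  ring

lemma ofReal_exp_cpow (x : ℝ) (w : ℂ) :
    (↑(Real.exp x) : ℂ) ^ w = Complex.exp (w * x) := by
  rw [Complex.ofReal_exp, Complex.cpow_def_of_ne_zero (Complex.exp_ne_zero _),
    Complex.log_exp (by rw [Complex.ofReal_im]; linarith [Real.pi_pos])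
      (by rw [Complex.ofReal_im]; linarith [Real.pi_pos]), mul_comm]

lemma ofReal_inv_cpow {p : ℝ} (hp : 0 < p) (w : ℂ) :
    (↑(p⁻¹) : ℂ) ^ w = ((p:ℂ) ^ w)⁻¹ := by
  rw [Complex.ofReal_inv,
    Complex.inv_cpow _ _ (by rw [Complex.arg_ofReal_of_nonneg hp.le]; exact Real.pi_ne_zero.symm)]

lemma J_value {ρ a : ℂ} (hu : 0 < ((1 - ρ + a) / 2).re) (hv : 0 < ((1 - ρ - a) / 2).re) :
    ∫ x : ℝ, Complex.exp (a * x) * (Real.cosh x : ℂ) ^ (ρ - 1)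
      = 2 ^ (-ρ) * Complex.Gamma ((1 - ρ + a) / 2) * Complex.Gamma ((1 - ρ - a) / 2)
        / Complex.Gamma (1 - ρ) := by
  set u := (1 - ρ + a) / 2 with hu_def
  set v := (1 - ρ - a) / 2 with hv_def
  have huv : u + v = 1 - ρ := by rw [hu_def, hv_def]; ring
  have h1ρ : 0 < (1 - ρ).re := by
    rw [← huv, Complex.add_re]; exact add_pos hu hv
  have hΓ : Complex.Gamma (1 - ρ) ≠ 0 := Complex.Gamma_ne_zero_of_re_pos h1ρ
  set f : ℝ → ℝ := fun x => Real.exp x / (2 * Real.cosh x) with hf_def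
  have hd : ∀ x : ℝ, HasDerivAt f (1 / (2 * Real.cosh x ^ 2)) x := by
    intro x
    have h1 : HasDerivAt (fun y : ℝ => 2 * Real.cosh y) (2 * Real.sinh x) x :=
      (Real.hasDerivAt_cosh x).const_mul 2
    have h2 := (Real.hasDerivAt_exp x).div h1 (by positivity)
    convert (show HasDerivAt f ((Real.exp x * (2 * Real.cosh x) - Real.exp x * (2 * Real.sinh x)) / (2 * Real.cosh x) ^ 2) x from h2) using 1
    have hcs : Real.cosh x - Real.sinh x = Real.exp (-x) := Real.cosh_sub_sinh x
    have he : Real.exp x * Real.exp (-x) = 1 := by rw [← Real.exp_add]; simp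
    have hnum : Real.exp x * (2 * Real.cosh x) - Real.exp x * (2 * Real.sinh x) = 2 := by
      have hkey : Real.exp x * (Real.cosh x - Real.sinh x) = 1 := by rw [hcs]; exact he
      linear_combination 2 * hkey
    rw [hnum]
    have hcp := Real.cosh_pos x
    field_simp
  have hmono : StrictMono f :=
    strictMono_of_deriv_pos (fun x => by
      rw [(hd x).deriv]; positivity)
  have himg : f '' Set.univ = Set.Ioo 0 1 := by
    apply Set.eq_of_subset_of_subset
    · rintro y ⟨x, -, rfl⟩
      have hcp := Real.cosh_pos x
      constructor
      · apply div_pos (Real.exp_pos x); positivity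
      · rw [hf_def]
        simp only
        rw [div_lt_one (by positivity), Real.cosh_eq]
        nlinarith [Real.exp_pos (-x)]
    · rintro y ⟨hy0, hy1⟩
      have h1y : (0:ℝ) < 1 - y := by linarith
      have hq : 0 < y / (1 - y) := div_pos hy0 h1y
      set s := Real.sqrt (y / (1 - y)) with hs_def
      have hs : 0 < s := Real.sqrt_pos.mpr hq
      have hs2 : s ^ 2 = y / (1 - y) := Real.sq_sqrt hq.le
      refine ⟨Real.log s, Set.mem_univ _, ?_⟩
      rw [hf_def]
      simp only
      rw [Real.cosh_eq, Real.exp_log hs, Real.exp_neg, Real.exp_log hs]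
      have hkey : s ^ 2 * (1 - y) = y := by rw [hs2]; field_simp
      rw [div_eq_iff (by positivity)]
      field_simp
      linear_combination hkey
  have hbeta := Complex.Gamma_mul_Gamma_eq_betaIntegral hu hv
  rw [huv] at hbeta
  have hbeta2 : Complex.betaIntegral u v
      = ∫ x in Set.Ioo (0:ℝ) 1, (x:ℂ) ^ (u - 1) * ((1:ℂ) - x) ^ (v - 1) := by
    rw [Complex.betaIntegral, intervalIntegral.integral_of_le zero_le_one,
      MeasureTheory.integral_Ioc_eq_integral_Ioo]
  have hcov : (∫ x in Set.Ioo (0:ℝ) 1, (x:ℂ) ^ (u - 1) * ((1:ℂ) - x) ^ (v - 1))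
      = ∫ x : ℝ, |1 / (2 * Real.cosh x ^ 2)| •
          ((f x : ℂ) ^ (u - 1) * ((1:ℂ) - (f x : ℂ)) ^ (v - 1)) := by
    rw [← himg, integral_image_eq_integral_abs_deriv_smul MeasurableSet.univ
      (fun x _ => (hd x).hasDerivWithinAt) (hmono.injective.injOn)]
    rw [Measure.restrict_univ]
  have hpt : ∀ x : ℝ, |1 / (2 * Real.cosh x ^ 2)| •
        ((f x : ℂ) ^ (u - 1) * ((1:ℂ) - (f x : ℂ)) ^ (v - 1))
      = (2:ℂ) ^ ρ * (Complex.exp (a * x) * (Real.cosh x : ℂ) ^ (ρ - 1)) := by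
    intro x
    have hcp := Real.cosh_pos x
    have h2c : (0:ℝ) < 2 * Real.cosh x := by positivity
    set E := ((2 * Real.cosh x : ℝ) : ℂ) with hE_def
    have hEne : E ≠ 0 := Complex.ofReal_ne_zero.mpr (ne_of_gt h2c)
    have hfx : (f x : ℂ) = (↑(Real.exp x) * ↑((2 * Real.cosh x)⁻¹) : ℂ) := by
      rw [hf_def]
      push_cast
      ring
    have h1fx : ((1:ℂ) - (f x : ℂ)) = (↑(Real.exp (-x)) * ↑((2 * Real.cosh x)⁻¹) : ℂ) := by
      have hr : 1 - f x = Real.exp (-x) * (2 * Real.cosh x)⁻¹ := by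
        rw [hf_def]
        simp only
        rw [Real.cosh_eq]
        have h0 : (0:ℝ) < Real.exp x + Real.exp (-x) := by positivity
        field_simp
        ring
      rw [show (1:ℂ) - (f x : ℂ) = ((1 - f x : ℝ) : ℂ) by push_cast; ring, hr,
        Complex.ofReal_mul]
    rw [h1fx, hfx,
      Complex.mul_cpow_ofReal_nonneg (Real.exp_pos x).le (by positivity),
      Complex.mul_cpow_ofReal_nonneg (Real.exp_pos (-x)).le (by positivity),
      ofReal_exp_cpow, ofReal_exp_cpow, ofReal_inv_cpow h2c, ofReal_inv_cpow h2c,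
      abs_of_pos (by positivity : (0:ℝ) < 1 / (2 * Real.cosh x ^ 2)), Complex.real_smul]
    have hsc : ((1 / (2 * Real.cosh x ^ 2) : ℝ) : ℂ) = 2 * (E * E)⁻¹ := by
      rw [hE_def]
      push_cast
      have : ((Real.cosh x : ℂ)) ≠ 0 := Complex.ofReal_ne_zero.mpr (ne_of_gt hcp)
      field_simp
    rw [hsc]
    have hexp : Complex.exp ((u - 1) * x) * Complex.exp ((v - 1) * ((-x : ℝ) : ℂ))
        = Complex.exp (a * x) := by
      rw [← Complex.exp_add]
      congr 1
      push_cast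
      rw [hu_def, hv_def]
      ring
    have hEE : E * E = E ^ (2:ℂ) := by
      rw [show (2:ℂ) = ((2:ℕ):ℂ) by norm_num, Complex.cpow_natCast]
      ring
    have hcomb : E ^ (-(u-1)) * E ^ (-(v-1)) * E ^ (-2:ℂ) = E ^ (ρ - 1) := by
      rw [← Complex.cpow_add _ _ hEne, ← Complex.cpow_add _ _ hEne]
      congr 1
      rw [hu_def, hv_def]
      ring
    have hEsplit : E ^ (ρ-1) = (2:ℂ) ^ (ρ-1) * (Real.cosh x : ℂ) ^ (ρ-1) := by
      rw [hE_def, Complex.ofReal_mul, Complex.mul_cpow_ofReal_nonneg (by norm_num) hcp.le]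
      norm_num
    have h2p : (2:ℂ) * (2:ℂ) ^ (ρ-1) = (2:ℂ) ^ ρ := by
      rw [show ρ = 1 + (ρ - 1) by ring, Complex.cpow_add _ _ two_ne_zero, Complex.cpow_one]
      ring
    calc (2 * (E * E)⁻¹ : ℂ) * (Complex.exp ((u - 1) * x) * (E ^ (u-1))⁻¹
          * (Complex.exp ((v - 1) * ((-x : ℝ) : ℂ)) * (E ^ (v-1))⁻¹))
        = 2 * (Complex.exp ((u - 1) * x) * Complex.exp ((v - 1) * ((-x : ℝ) : ℂ)))
          * ((E ^ (u-1))⁻¹ * (E ^ (v-1))⁻¹ * (E * E)⁻¹) := by ring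
      _ = 2 * Complex.exp (a * x) * (E ^ (-(u-1)) * E ^ (-(v-1)) * E ^ (-2:ℂ)) := by
          rw [hexp, hEE, ← Complex.cpow_neg, ← Complex.cpow_neg, ← Complex.cpow_neg]
      _ = 2 * Complex.exp (a * x) * ((2:ℂ) ^ (ρ-1) * (Real.cosh x : ℂ) ^ (ρ-1)) := by
          rw [hcomb, hEsplit]
      _ = (2:ℂ) ^ ρ * (Complex.exp (a * x) * (Real.cosh x : ℂ) ^ (ρ - 1)) := by
          rw [← h2p]; ring
  -- assemble
  have hintJ : (∫ x : ℝ, |1 / (2 * Real.cosh x ^ 2)| •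
        ((f x : ℂ) ^ (u - 1) * ((1:ℂ) - (f x : ℂ)) ^ (v - 1)))
      = (2:ℂ) ^ ρ * ∫ x : ℝ, Complex.exp (a * x) * (Real.cosh x : ℂ) ^ (ρ - 1) := by
    simp_rw [hpt]
    rw [integral_const_mul]
  rw [hbeta2, hcov, hintJ] at hbeta
  have h1 : (2:ℂ) ^ (-ρ) * (2:ℂ) ^ ρ = 1 := by
    rw [← Complex.cpow_add _ _ two_ne_zero]
    simp
  rw [eq_div_iff hΓ]
  linear_combination (-(2:ℂ)^(-ρ)) * hbeta -
    (∫ x : ℝ, Complex.exp (a * x) * (Real.cosh x : ℂ) ^ (ρ - 1)) * Complex.Gamma (1-ρ) * h1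

lemma half_abs_add_le (t u x y : ℝ) (hx : x = (t + u) / 2) (hy : y = (t - u) / 2) :
    |t| / 2 + |u| / 2 ≤ |x| + |y| := by
  have h1 : |t| ≤ |x| + |y| := by
    calc |t| = |x + y| := by rw [hx, hy]; ring_nf
      _ ≤ |x| + |y| := abs_add_le x y
  have h2 : |u| ≤ |x| + |y| := by
    calc |u| = |x - y| := by rw [hx, hy]; ring_nf
      _ = |x + -y| := by rw [sub_eq_add_neg]
      _ ≤ |x| + |-y| := abs_add_le x (-y)
      _ = |x| + |y| := by rw [abs_neg]
  linarith

lemma integrable_M2 {σ b b' δ : ℝ} (hσ : σ ≤ 0) (hδ : 0 < δ)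
    (h1 : |b + b'| + δ ≤ -σ) (h2 : |b - b'| + δ ≤ -σ) :
    Integrable (fun p : ℝ × ℝ =>
      (Real.cosh p.1 + Real.cosh p.2) ^ σ * Real.exp (b * p.1 + b' * p.2)) := by
  apply Integrable.mono'
    ((integrable_exp_neg_abs2 (δ := δ/2) (by linarith)).const_mul (2 ^ (-σ)))
  · apply Continuous.aestronglyMeasurable
    apply Continuous.mul
    · apply Continuous.rpow_const
      · exact (Real.continuous_cosh.comp continuous_fst).add
          (Real.continuous_cosh.comp continuous_snd)
      · intro p
        left
        have := Real.cosh_pos p.1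
        have := Real.cosh_pos p.2
        positivity
    · exact Real.continuous_exp.comp ((continuous_const.mul continuous_fst).add
        (continuous_const.mul continuous_snd))
  · filter_upwards with p
    obtain ⟨t, u⟩ := p
    set x := (t + u) / 2 with hx
    set y := (t - u) / 2 with hy
    have hcx := Real.cosh_pos x
    have hcy := Real.cosh_pos y
    have hct := Real.cosh_pos t
    have hcu := Real.cosh_pos u
    have hb1 := cosh_rpow_mul_exp_le hσ h1 x
    have hb2 := cosh_rpow_mul_exp_le hσ h2 y
    have hrw : (Real.cosh t + Real.cosh u) ^ σ * Real.exp (b * t + b' * u)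
        = 2 ^ σ * ((Real.cosh x ^ σ * Real.exp ((b + b') * x))
          * (Real.cosh y ^ σ * Real.exp ((b - b') * y))) := by
      rw [cosh_add_cosh t u, Real.mul_rpow (by norm_num) (by positivity),
        Real.mul_rpow hcx.le hcy.le,
        show b * t + b' * u = (b + b') * x + (b - b') * y by rw [hx, hy]; ring,
        Real.exp_add]
      ring
    rw [Real.norm_eq_abs, abs_of_pos (by positivity), hrw]
    have step1 : (2:ℝ) ^ σ * ((Real.cosh x ^ σ * Real.exp ((b + b') * x))
          * (Real.cosh y ^ σ * Real.exp ((b - b') * y)))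
        ≤ 2 ^ σ * ((2 ^ (-σ) * Real.exp (-δ * |x|)) * (2 ^ (-σ) * Real.exp (-δ * |y|))) := by
      apply mul_le_mul_of_nonneg_left _ (by positivity)
      exact mul_le_mul hb1 hb2 (by positivity) (by positivity)
    apply step1.trans
    have h2σ : (2:ℝ) ^ σ * ((2:ℝ) ^ (-σ) * (2:ℝ) ^ (-σ)) = 2 ^ (-σ) := by
      rw [← Real.rpow_add two_pos, ← Real.rpow_add two_pos]
      ring_nf
    have habs : Real.exp (-δ * |x|) * Real.exp (-δ * |y|)
        ≤ Real.exp (-(δ/2) * |t|) * Real.exp (-(δ/2) * |u|) := by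
      rw [← Real.exp_add, ← Real.exp_add]
      apply Real.exp_le_exp.mpr
      have := half_abs_add_le t u x y hx hy
      nlinarith
    calc (2:ℝ) ^ σ * ((2 ^ (-σ) * Real.exp (-δ * |x|)) * (2 ^ (-σ) * Real.exp (-δ * |y|)))
        = (2 ^ σ * (2 ^ (-σ) * 2 ^ (-σ))) * (Real.exp (-δ * |x|) * Real.exp (-δ * |y|)) := by
          ring
      _ ≤ 2 ^ (-σ) * (Real.exp (-(δ/2) * |t|) * Real.exp (-(δ/2) * |u|)) := by
          rw [h2σ]
          exact mul_le_mul_of_nonneg_left habs (by positivity)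

lemma integrable_conv {w a1 a2 : ℂ} {δ : ℝ} (hσ : w.re ≤ 0) (hδ : 0 < δ)
    (h1 : |a1.re| + δ ≤ -w.re) (h2 : |a2.re| + δ ≤ -w.re) :
    Integrable (fun q : ℝ × ℝ =>
      (Complex.exp (a1 * q.2) * (Real.cosh q.2 : ℂ) ^ w)
        * (Complex.exp (a2 * (q.1 - q.2 : ℝ)) * (Real.cosh (q.1 - q.2) : ℂ) ^ w)) := by
  apply Integrable.mono'
    ((integrable_exp_neg_abs2 (δ := δ/2) (by linarith)).const_mul (2 ^ (-w.re) * 2 ^ (-w.re)))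
  · apply Continuous.aestronglyMeasurable
    exact ((continuous_J a1 w).comp continuous_snd).mul
      ((continuous_J a2 w).comp (continuous_fst.sub continuous_snd))
  · filter_upwards with q
    obtain ⟨s, y⟩ := q
    dsimp only
    rw [norm_mul, norm_exp_mul_cosh_cpow, norm_exp_mul_cosh_cpow]
    have hb1 := cosh_rpow_mul_exp_le hσ h1 y
    have hb2 := cosh_rpow_mul_exp_le hσ h2 (s - y)
    have habs : Real.exp (-δ * |y|) * Real.exp (-δ * |s - y|)
        ≤ Real.exp (-(δ/2) * |s|) * Real.exp (-(δ/2) * |y|) := by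
      rw [← Real.exp_add, ← Real.exp_add]
      apply Real.exp_le_exp.mpr
      have h1' : |s| ≤ |y| + |s - y| := by
        calc |s| = |y + (s - y)| := by ring_nf
          _ ≤ |y| + |s - y| := abs_add_le _ _
      have h2' : |y| ≤ |y| + |s - y| := le_add_of_nonneg_right (abs_nonneg _)
      nlinarith
    calc Real.exp (a1.re * y) * Real.cosh y ^ w.re
          * (Real.exp (a2.re * (s - y)) * Real.cosh (s - y) ^ w.re)
        = (Real.cosh y ^ w.re * Real.exp (a1.re * y))
          * (Real.cosh (s - y) ^ w.re * Real.exp (a2.re * (s - y))) := by ring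
      _ ≤ (2 ^ (-w.re) * Real.exp (-δ * |y|)) * (2 ^ (-w.re) * Real.exp (-δ * |s - y|)) := by
          apply mul_le_mul hb1 hb2 (by have := Real.cosh_pos (s - y); positivity) (by positivity)
      _ = (2 ^ (-w.re) * 2 ^ (-w.re)) * (Real.exp (-δ * |y|) * Real.exp (-δ * |s - y|)) := by
          ring
      _ ≤ (2 ^ (-w.re) * 2 ^ (-w.re)) * (Real.exp (-(δ/2) * |s|) * Real.exp (-(δ/2) * |y|)) := by
          apply mul_le_mul_of_nonneg_left habs (by positivity)

lemma integrable_mellin_aux {σ' c : ℝ} (hσ' : σ' < 1) (hc : 0 < c) :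
    IntegrableOn (fun r : ℝ => r ^ (-σ') * Real.exp (-(c * r))) (Set.Ioi 0) := by
  have h := integrableOn_rpow_mul_exp_neg_mul_rpow (s := -σ') (p := 1) (b := c)
    (by linarith) zero_lt_one hc
  apply h.congr_fun ?_ measurableSet_Ioi
  intro x _
  simp only [Real.rpow_one, neg_mul]

noncomputable def myH (ν μ ρ : ℂ) (r : ℝ) (p : ℝ × ℝ) : ℂ :=
  (r:ℂ) ^ (-ρ) * ((Complex.exp (-(r:ℂ) * Real.cosh p.1) * Complex.exp (ν * p.1))
    * (Complex.exp (-(r:ℂ) * Real.cosh p.2) * Complex.exp (μ * p.2)))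

lemma norm_myH (ν μ ρ : ℂ) {r : ℝ} (hr : 0 < r) (p : ℝ × ℝ) :
    ‖myH ν μ ρ r p‖ = r ^ (-ρ.re) *
      Real.exp (-((Real.cosh p.1 + Real.cosh p.2) * r) + (ν.re * p.1 + μ.re * p.2)) := by
  unfold myH
  rw [norm_mul, norm_mul, norm_mul, norm_mul, norm_cpow_of_pos hr,
    my_norm_exp, my_norm_exp, my_norm_exp, my_norm_exp]
  simp only [Complex.neg_re, Complex.re_mul_ofReal, Complex.ofReal_re,
    Complex.mul_re, Complex.ofReal_im, Complex.neg_im, mul_zero, sub_zero]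
  rw [← Real.exp_add, ← Real.exp_add, ← Real.exp_add]
  congr 2
  ring

lemma continuous_myH_snd (ν μ ρ : ℂ) (r : ℝ) :
    Continuous fun p : ℝ × ℝ => (Complex.exp (-(r:ℂ) * Real.cosh p.1) * Complex.exp (ν * p.1))
      * (Complex.exp (-(r:ℂ) * Real.cosh p.2) * Complex.exp (μ * p.2)) := by
  have base : ∀ (a : ℂ), Continuous fun x : ℝ =>
      Complex.exp (-(r:ℂ) * Real.cosh x) * Complex.exp (a * x) := by
    intro a
    exact (Complex.continuous_exp.comp (continuous_const.mul
      (Complex.continuous_ofReal.comp Real.continuous_cosh))).mul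
      (Complex.continuous_exp.comp (continuous_const.mul Complex.continuous_ofReal))
  exact ((base ν).comp continuous_fst).mul ((base μ).comp continuous_snd)

lemma integrable_myH (ν μ ρ : ℂ) {δ : ℝ} (hδ : 0 < δ) (hρ : ρ.re < 1)
    (hδ1 : |(ν + μ).re| + δ ≤ 1 - ρ.re) (hδ2 : |(ν - μ).re| + δ ≤ 1 - ρ.re) :
    Integrable (Function.uncurry (myH ν μ ρ))
      ((volume.restrict (Set.Ioi 0)).prod volume) := by
  have hAESM : AEStronglyMeasurable (Function.uncurry (myH ν μ ρ))
      ((volume.restrict (Set.Ioi 0)).prod volume) := by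
    rw [show (volume : Measure (ℝ × ℝ)) = volume.restrict Set.univ from
        (Measure.restrict_univ).symm, Measure.prod_restrict]
    apply ContinuousOn.aestronglyMeasurable ?_ (measurableSet_Ioi.prod MeasurableSet.univ)
    intro z hz
    apply ContinuousAt.continuousWithinAt
    apply ContinuousAt.mul
    · apply ContinuousAt.cpow
      · exact (Complex.continuous_ofReal.comp continuous_fst).continuousAt
      · exact continuousAt_const
      · exact Complex.ofReal_mem_slitPlane.mpr hz.1
    · have : Continuous fun z : ℝ × (ℝ × ℝ) =>
          (Complex.exp (-(z.1:ℂ) * Real.cosh z.2.1) * Complex.exp (ν * z.2.1))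
            * (Complex.exp (-(z.1:ℂ) * Real.cosh z.2.2) * Complex.exp (μ * z.2.2)) := by
        apply Continuous.mul <;> apply Continuous.mul
        · exact Complex.continuous_exp.comp ((Complex.continuous_ofReal.comp
            continuous_fst).neg.mul (Complex.continuous_ofReal.comp
              (Real.continuous_cosh.comp (continuous_fst.comp continuous_snd))))
        · exact Complex.continuous_exp.comp (continuous_const.mul
            (Complex.continuous_ofReal.comp (continuous_fst.comp continuous_snd)))
        · exact Complex.continuous_exp.comp ((Complex.continuous_ofReal.comp
            continuous_fst).neg.mul (Complex.continuous_ofReal.comp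
              (Real.continuous_cosh.comp (continuous_snd.comp continuous_snd))))
        · exact Complex.continuous_exp.comp (continuous_const.mul
            (Complex.continuous_ofReal.comp (continuous_snd.comp continuous_snd)))
      exact this.continuousAt
  rw [integrable_prod_iff' hAESM]
  constructor
  · apply Filter.Eventually.of_forall
    intro p
    have hc : 0 < Real.cosh p.1 + Real.cosh p.2 := by
      have := Real.cosh_pos p.1; have := Real.cosh_pos p.2; positivity
    apply Integrable.mono' (((integrable_mellin_aux hρ hc).const_mul
      (Real.exp (ν.re * p.1 + μ.re * p.2))))
    · -- AESM of fun r => myH ν μ ρ r p on restrict Ioi 0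
      apply ContinuousOn.aestronglyMeasurable ?_ measurableSet_Ioi
      intro r hr
      apply ContinuousAt.continuousWithinAt
      apply ContinuousAt.mul
      · exact ContinuousAt.cpow (Complex.continuous_ofReal.continuousAt)
          continuousAt_const (Complex.ofReal_mem_slitPlane.mpr hr)
      · have : Continuous fun r : ℝ =>
            (Complex.exp (-(r:ℂ) * Real.cosh p.1) * Complex.exp (ν * p.1))
              * (Complex.exp (-(r:ℂ) * Real.cosh p.2) * Complex.exp (μ * p.2)) := by
          apply Continuous.mul <;> apply Continuous.mul
          · exact Complex.continuous_exp.comp (Complex.continuous_ofReal.neg.mul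
              continuous_const)
          · exact continuous_const
          · exact Complex.continuous_exp.comp (Complex.continuous_ofReal.neg.mul
              continuous_const)
          · exact continuous_const
        exact this.continuousAt
    · filter_upwards [ae_restrict_mem measurableSet_Ioi] with r hr
      show ‖myH ν μ ρ r p‖ ≤ _
      rw [norm_myH ν μ ρ hr p, Real.exp_add]
      exact le_of_eq (by ring)
  · -- integral of norms
    apply Integrable.congr ((integrable_M2 (σ := ρ.re - 1) (b := ν.re) (b' := μ.re)
      (by linarith) hδ ?_ ?_).const_mul (Real.Gamma (1 - ρ.re)))
    · apply Filter.Eventually.of_forall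
      intro p
      have hc : 0 < Real.cosh p.1 + Real.cosh p.2 := by
        have := Real.cosh_pos p.1; have := Real.cosh_pos p.2; positivity
      have hmell := Real.integral_rpow_mul_exp_neg_mul_Ioi
        (a := 1 - ρ.re) (r := Real.cosh p.1 + Real.cosh p.2) (by linarith) hc
      rw [show (1:ℝ) - ρ.re - 1 = -ρ.re from by ring] at hmell
      have hval : (∫ r in Set.Ioi (0:ℝ), ‖myH ν μ ρ r p‖)
          = (1 / (Real.cosh p.1 + Real.cosh p.2)) ^ (1 - ρ.re) * Real.Gamma (1 - ρ.re)
            * Real.exp (ν.re * p.1 + μ.re * p.2) := by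
        rw [setIntegral_congr_fun measurableSet_Ioi
          (fun r hr => norm_myH ν μ ρ hr p)]
        have hsplit : ∀ r : ℝ, r ^ (-ρ.re) *
            Real.exp (-((Real.cosh p.1 + Real.cosh p.2) * r) + (ν.re * p.1 + μ.re * p.2))
            = (r ^ (-ρ.re) * Real.exp (-((Real.cosh p.1 + Real.cosh p.2) * r)))
              * Real.exp (ν.re * p.1 + μ.re * p.2) := by
          intro r
          rw [Real.exp_add]
          ring
        simp_rw [hsplit]
        rw [integral_mul_const, hmell]
      have hpow : (1 / (Real.cosh p.1 + Real.cosh p.2)) ^ (1 - ρ.re)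
          = (Real.cosh p.1 + Real.cosh p.2) ^ (ρ.re - 1) := by
        rw [one_div, Real.inv_rpow hc.le, ← Real.rpow_neg hc.le,
          show -(1 - ρ.re) = ρ.re - 1 from by ring]
      show _ = ∫ r in Set.Ioi (0:ℝ), ‖myH ν μ ρ r p‖
      rw [hval, hpow]
      ring
    · rw [show -(ρ.re - 1) = 1 - ρ.re from by ring, ← Complex.add_re]; exact hδ1
    · rw [show -(ρ.re - 1) = 1 - ρ.re from by ring, ← Complex.sub_re]; exact hδ2

lemma integral_eq_two_mul_comp (g : ℝ → ℂ) (t : ℝ) :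
    (∫ u : ℝ, g u) = 2 * ∫ y : ℝ, g (2 * y - t) := by
  have h1 : (∫ y : ℝ, g (2 * y - t)) = ∫ y : ℝ, g (2 * y) := by
    have h := integral_sub_right_eq_self (μ := volume) (fun y : ℝ => g (2 * y)) (t / 2)
    rw [← h]
    congr 1
    funext y
    congr 1
    ring
  rw [h1, MeasureTheory.Measure.integral_comp_mul_left g 2,
    abs_of_pos (by norm_num : (0:ℝ) < 2⁻¹), Complex.real_smul]
  push_cast
  ring

/-- For `ν, μ, ρ ∈ ℂ` with `Re(1 ± ν ± μ - ρ) > 0` (all four sign choices),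
`2^{ρ+2} Γ(1-ρ) ∫_0^∞ K_ν(r) K_μ(r) r^{-ρ} dr
  = Γ((1+ν+μ-ρ)/2) Γ((1+ν-μ-ρ)/2) Γ((1-ν+μ-ρ)/2) Γ((1-ν-μ-ρ)/2)`. -/
theorem stmt7 (ν μ ρ : ℂ)
    (h1 : 0 < (1 + ν + μ - ρ).re) (h2 : 0 < (1 + ν - μ - ρ).re)
    (h3 : 0 < (1 - ν + μ - ρ).re) (h4 : 0 < (1 - ν - μ - ρ).re) :
    (2 : ℂ) ^ (ρ + 2) * Complex.Gamma (1 - ρ) *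
        ∫ r in Set.Ioi (0 : ℝ), besselK ν r * besselK μ r * (r : ℂ) ^ (-ρ) =
      Complex.Gamma ((1 + ν + μ - ρ) / 2) * Complex.Gamma ((1 + ν - μ - ρ) / 2) *
        Complex.Gamma ((1 - ν + μ - ρ) / 2) * Complex.Gamma ((1 - ν - μ - ρ) / 2) := by
  simp only [Complex.add_re, Complex.sub_re, Complex.one_re] at h1 h2 h3 h4
  have hb1 : |(ν + μ).re| < 1 - ρ.re := by
    rw [abs_lt, Complex.add_re]; constructor <;> linarith
  have hb2 : |(ν - μ).re| < 1 - ρ.re := by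
    rw [abs_lt, Complex.sub_re]; constructor <;> linarith
  have hρre : ρ.re < 1 := by have := abs_nonneg ((ν + μ).re); linarith
  have hρ1 : 0 < (1 - ρ).re := by
    rw [Complex.sub_re, Complex.one_re]; linarith
  have hΓne : Complex.Gamma (1 - ρ) ≠ 0 := Complex.Gamma_ne_zero_of_re_pos hρ1
  set δ := (1 - ρ.re - max |(ν + μ).re| |(ν - μ).re|) / 2 with hδdef
  have hδ : 0 < δ := by
    have := max_lt hb1 hb2
    rw [hδdef]; linarith
  have hδ1 : |(ν + μ).re| + δ ≤ 1 - ρ.re := by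
    have := le_max_left |(ν + μ).re| |(ν - μ).re|
    rw [hδdef]; linarith
  have hδ2 : |(ν - μ).re| + δ ≤ 1 - ρ.re := by
    have := le_max_right |(ν + μ).re| |(ν - μ).re|
    rw [hδdef]; linarith
  have hδ1' : |ν.re + μ.re| + δ ≤ -(ρ.re - 1) := by
    rw [← Complex.add_re, show -(ρ.re - 1) = 1 - ρ.re from by ring]; exact hδ1
  have hδ2' : |ν.re - μ.re| + δ ≤ -(ρ.re - 1) := by
    rw [← Complex.sub_re, show -(ρ.re - 1) = 1 - ρ.re from by ring]; exact hδ2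
  -- Gamma argument positivity
  have hgu1 : 0 < ((1 - ρ + (ν + μ)) / 2).re := by
    rw [Complex.div_ofNat_re, Complex.add_re, Complex.sub_re, Complex.one_re, Complex.add_re]
    linarith
  have hgu4 : 0 < ((1 - ρ - (ν + μ)) / 2).re := by
    rw [Complex.div_ofNat_re, Complex.sub_re, Complex.sub_re, Complex.one_re, Complex.add_re]
    linarith
  have hgu2 : 0 < ((1 - ρ + (ν - μ)) / 2).re := by
    rw [Complex.div_ofNat_re, Complex.add_re, Complex.sub_re, Complex.one_re, Complex.sub_re]
    linarith
  have hgu3 : 0 < ((1 - ρ - (ν - μ)) / 2).re := by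
    rw [Complex.div_ofNat_re, Complex.sub_re, Complex.sub_re, Complex.one_re, Complex.sub_re]
    linarith
  -- Step A: integrand as double integral
  have stepA : ∀ r ∈ Set.Ioi (0:ℝ), besselK ν r * besselK μ r * (r:ℂ) ^ (-ρ)
      = (1/4 : ℂ) * ∫ p : ℝ × ℝ, myH ν μ ρ r p := by
    intro r hr
    rw [Set.mem_Ioi] at hr
    rw [besselK_eq_half ν hr, besselK_eq_half μ hr]
    have hprod : (∫ t : ℝ, Complex.exp (-(r:ℂ) * Real.cosh t) * Complex.exp (ν * t))
        * (∫ t : ℝ, Complex.exp (-(r:ℂ) * Real.cosh t) * Complex.exp (μ * t))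
        = ∫ p : ℝ × ℝ, (Complex.exp (-(r:ℂ) * Real.cosh p.1) * Complex.exp (ν * p.1))
            * (Complex.exp (-(r:ℂ) * Real.cosh p.2) * Complex.exp (μ * p.2)) := by
      rw [Measure.volume_eq_prod]
      exact (integral_prod_mul _ _).symm
    calc (1/2 : ℂ) * (∫ t : ℝ, Complex.exp (-(r:ℂ) * Real.cosh t) * Complex.exp (ν * t))
          * ((1/2 : ℂ) * ∫ t : ℝ, Complex.exp (-(r:ℂ) * Real.cosh t) * Complex.exp (μ * t))
          * (r:ℂ) ^ (-ρ)
        = (1/4 : ℂ) * ((r:ℂ) ^ (-ρ) *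
            ((∫ t : ℝ, Complex.exp (-(r:ℂ) * Real.cosh t) * Complex.exp (ν * t))
             * (∫ t : ℝ, Complex.exp (-(r:ℂ) * Real.cosh t) * Complex.exp (μ * t)))) := by
          ring
      _ = (1/4 : ℂ) * ((r:ℂ) ^ (-ρ) * ∫ p : ℝ × ℝ,
            (Complex.exp (-(r:ℂ) * Real.cosh p.1) * Complex.exp (ν * p.1))
              * (Complex.exp (-(r:ℂ) * Real.cosh p.2) * Complex.exp (μ * p.2))) := by
          rw [hprod]
      _ = (1/4 : ℂ) * ∫ p : ℝ × ℝ, myH ν μ ρ r p := by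
          rw [← integral_const_mul]
          rfl
  rw [setIntegral_congr_fun measurableSet_Ioi stepA, integral_const_mul,
    integral_integral_swap (integrable_myH ν μ ρ hδ hρre hδ1 hδ2)]
  -- Step C: inner Mellin integral
  have stepC : ∀ p : ℝ × ℝ, (∫ r in Set.Ioi (0:ℝ), myH ν μ ρ r p)
      = Complex.Gamma (1 - ρ) * ((((Real.cosh p.1 + Real.cosh p.2 : ℝ)):ℂ) ^ (ρ-1)
          * (Complex.exp (ν * p.1) * Complex.exp (μ * p.2))) := by
    intro p
    have hc : 0 < Real.cosh p.1 + Real.cosh p.2 := by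
      have := Real.cosh_pos p.1; have := Real.cosh_pos p.2; positivity
    have hre : ∀ r : ℝ, myH ν μ ρ r p
        = ((r:ℂ) ^ (-ρ) * Complex.exp (-((((Real.cosh p.1 + Real.cosh p.2 : ℝ)):ℂ) * r)))
          * (Complex.exp (ν * p.1) * Complex.exp (μ * p.2)) := by
      intro r
      unfold myH
      rw [show -((((Real.cosh p.1 + Real.cosh p.2 : ℝ)):ℂ) * r)
          = (-(r:ℂ) * Real.cosh p.1) + (-(r:ℂ) * Real.cosh p.2) from by push_cast; ring,
        Complex.exp_add]
      ring
    rw [setIntegral_congr_fun measurableSet_Ioi (fun r _ => hre r), integral_mul_const,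
      mellin_exp hρ1 hc]
    ring
  simp_rw [stepC]
  rw [integral_const_mul]
  -- Step E: iterated integral and substitution
  have hInt2 : Integrable (fun p : ℝ × ℝ =>
      (((Real.cosh p.1 + Real.cosh p.2 : ℝ)):ℂ) ^ (ρ-1)
        * (Complex.exp (ν * p.1) * Complex.exp (μ * p.2))) volume := by
    apply Integrable.mono' (integrable_M2 (σ := ρ.re - 1) (b := ν.re) (b' := μ.re)
      (by linarith) hδ hδ1' hδ2')
    · apply Continuous.aestronglyMeasurable
      apply Continuous.mul
      · apply Continuous.cpow
        · exact Complex.continuous_ofReal.comp ((Real.continuous_cosh.comp continuous_fst).add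
            (Real.continuous_cosh.comp continuous_snd))
        · exact continuous_const
        · intro p
          apply Complex.ofReal_mem_slitPlane.mpr
          have := Real.cosh_pos p.1; have := Real.cosh_pos p.2; positivity
      · exact (Complex.continuous_exp.comp (continuous_const.mul
          (Complex.continuous_ofReal.comp continuous_fst))).mul
          (Complex.continuous_exp.comp (continuous_const.mul
            (Complex.continuous_ofReal.comp continuous_snd)))
    · filter_upwards with p
      have hc : 0 < Real.cosh p.1 + Real.cosh p.2 := by
        have := Real.cosh_pos p.1; have := Real.cosh_pos p.2; positivity
      rw [norm_mul, norm_mul, norm_cpow_of_pos hc, my_norm_exp, my_norm_exp,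
        Complex.re_mul_ofReal, Complex.re_mul_ofReal, Real.exp_add]
      simp only [Complex.add_re, Complex.neg_re, Complex.one_re, Complex.sub_re]
      exact le_of_eq (by ring)
  rw [Measure.volume_eq_prod] at hInt2 ⊢
  rw [integral_prod _ hInt2]
  -- Step F: substitution in inner integral
  have stepF : ∀ t : ℝ, (∫ u : ℝ, (((Real.cosh t + Real.cosh u : ℝ)):ℂ) ^ (ρ-1)
        * (Complex.exp (ν * t) * Complex.exp (μ * u)))
      = 2 * (2:ℂ) ^ (ρ-1) * ∫ y : ℝ,
          (Complex.exp ((ν+μ) * y) * (Real.cosh y : ℂ) ^ (ρ-1))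
            * (Complex.exp ((ν-μ) * (t - y : ℝ)) * (Real.cosh (t - y) : ℂ) ^ (ρ-1)) := by
    intro t
    rw [integral_eq_two_mul_comp (fun u => (((Real.cosh t + Real.cosh u : ℝ)):ℂ) ^ (ρ-1)
      * (Complex.exp (ν * t) * Complex.exp (μ * u))) t, mul_assoc]
    congr 1
    rw [← integral_const_mul]
    congr 1
    funext y
    have hcc : Real.cosh t + Real.cosh (2 * y - t)
        = 2 * (Real.cosh y * Real.cosh (t - y)) := by
      have h := cosh_add_cosh t (2 * y - t)
      rw [show (t + (2 * y - t)) / 2 = y from by ring,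
        show (t - (2 * y - t)) / 2 = t - y from by ring] at h
      exact h
    rw [hcc, Complex.ofReal_mul,
      Complex.mul_cpow_ofReal_nonneg (by norm_num) (by positivity), Complex.ofReal_mul,
      Complex.mul_cpow_ofReal_nonneg (Real.cosh_pos y).le (Real.cosh_pos (t - y)).le]
    have hexp : Complex.exp (ν * t) * Complex.exp (μ * ((2 * y - t : ℝ) : ℂ))
        = Complex.exp ((ν+μ) * y) * Complex.exp ((ν-μ) * ((t - y : ℝ) : ℂ)) := by
      rw [← Complex.exp_add, ← Complex.exp_add]
      congr 1
      push_cast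
      ring
    rw [hexp]
    push_cast
    ring
  simp_rw [stepF]
  rw [integral_const_mul]
  -- Step G: swap convolution
  have hconv := integrable_conv (w := ρ - 1) (a1 := ν + μ) (a2 := ν - μ) (δ := δ)
    (by simp only [Complex.sub_re, Complex.one_re]; linarith) hδ
    (by simp only [Complex.sub_re, Complex.one_re]; exact hδ1')
    (by simp only [Complex.sub_re, Complex.one_re]; exact hδ2')
  rw [Measure.volume_eq_prod] at hconv
  have stepG : (∫ t : ℝ, ∫ y : ℝ,
        (Complex.exp ((ν+μ) * y) * (Real.cosh y : ℂ) ^ (ρ-1))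
          * (Complex.exp ((ν-μ) * (t - y : ℝ)) * (Real.cosh (t - y) : ℂ) ^ (ρ-1)))
      = (∫ y : ℝ, Complex.exp ((ν+μ) * y) * (Real.cosh y : ℂ) ^ (ρ-1))
        * (∫ y : ℝ, Complex.exp ((ν-μ) * y) * (Real.cosh y : ℂ) ^ (ρ-1)) := by
    rw [integral_integral_swap hconv]
    have : ∀ y : ℝ, (∫ t : ℝ, (Complex.exp ((ν+μ) * y) * (Real.cosh y : ℂ) ^ (ρ-1))
          * (Complex.exp ((ν-μ) * (t - y : ℝ)) * (Real.cosh (t - y) : ℂ) ^ (ρ-1)))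
        = (Complex.exp ((ν+μ) * y) * (Real.cosh y : ℂ) ^ (ρ-1))
          * ∫ t : ℝ, Complex.exp ((ν-μ) * t) * (Real.cosh t : ℂ) ^ (ρ-1) := by
      intro y
      rw [integral_const_mul]
      congr 1
      exact integral_sub_right_eq_self
        (fun t : ℝ => Complex.exp ((ν-μ) * t) * (Real.cosh t : ℂ) ^ (ρ-1)) y
    simp_rw [this]
    rw [integral_mul_const]
  rw [stepG, J_value hgu1 hgu4, J_value hgu2 hgu3]
  rw [show (1 - ρ + (ν + μ)) / 2 = (1 + ν + μ - ρ) / 2 from by ring,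
    show (1 - ρ - (ν + μ)) / 2 = (1 - ν - μ - ρ) / 2 from by ring,
    show (1 - ρ + (ν - μ)) / 2 = (1 + ν - μ - ρ) / 2 from by ring,
    show (1 - ρ - (ν - μ)) / 2 = (1 - ν + μ - ρ) / 2 from by ring]
  have hpw : (2:ℂ) ^ (ρ + 2) * ((2:ℂ) ^ (-ρ) * (2:ℂ) ^ (-ρ)) * ((2:ℂ) * (2:ℂ) ^ (ρ - 1)) = 4 := by
    have hc2 : ∀ x y : ℂ, (2:ℂ) ^ x * (2:ℂ) ^ y = 2 ^ (x + y) :=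
      fun x y => (Complex.cpow_add _ _ two_ne_zero).symm
    rw [hc2, hc2, show ∀ a b : ℂ, a * ((2:ℂ) * b) = 2 * (a * b) from fun a b => by ring,
      hc2, show ρ + 2 + (-ρ + -ρ) + (ρ - 1) = 1 from by ring, Complex.cpow_one]
    norm_num
  field_simp [hΓne]
  linear_combination (Complex.Gamma ((1 + ν + μ - ρ) / 2) * Complex.Gamma ((1 + ν - μ - ρ) / 2) *
    Complex.Gamma ((1 - ν + μ - ρ) / 2) * Complex.Gamma ((1 - ν - μ - ρ) / 2)) * hpw
end
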